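/- Let X be a topological space and let 𝒪 be a finite, nonempty family of pairwise disjoint, nonempty, locally closed subsets of X such that the closure in X of each member of 𝒪 is a union of members of 𝒪. Then at least one member of 𝒪 is closed in X. -/

import Mathlib

/-- Topological content of Lemma 9.2 (ii) of the paper (existence of a closed orbit):
a finite nonempty family of pairwise disjoint nonempty locally closed subsets of a
topological space, such that the closure of each member is a union of members,
contains a closed member. -/
theorem stmt7 {X : Type*} [TopologicalSpace X] (𝒪 : Finset (Set X)) (h𝒪 : 𝒪.Nonempty)
    (hne : ∀ O ∈ 𝒪, O.Nonempty)
    (hdisj : ∀ O ∈ 𝒪, ∀ O' ∈ 𝒪, O ≠ O' → Disjoint O O')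
    (hlc : ∀ O ∈ 𝒪, IsLocallyClosed O)
    (hcl : ∀ O ∈ 𝒪, ∃ S ⊆ 𝒪, closure O = ⋃ O' ∈ S, (O' : Set X)) :
    ∃ O ∈ 𝒪, IsClosed O := by
  classical
  -- pick a member with minimal closure
  obtain ⟨m, hm, hmin⟩ := (𝒪.image closure).exists_minimal (h𝒪.image closure)
  simp only [Finset.mem_image] at hm
  obtain ⟨O, hO, rfl⟩ := hm
  refine ⟨O, hO, ?_⟩
  by_contra hOc
  -- closure O \ O is nonempty
  have hproper : (closure O \ O).Nonempty := by
    rw [Set.diff_nonempty]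
    intro hsub
    exact hOc (closure_subset_iff_isClosed.mp hsub)
  obtain ⟨x, hxcl, hxO⟩ := hproper
  obtain ⟨S, hS, hclO⟩ := hcl O hO
  have hx : x ∈ ⋃ O' ∈ S, (O' : Set X) := hclO ▸ hxcl
  simp only [Set.mem_iUnion] at hx
  obtain ⟨O', hO'S, hxO'⟩ := hx
  have hO'𝒪 := hS hO'S
  have hne' : O' ≠ O := by
    rintro rfl; exact hxO hxO'
  -- closure O \ O is closed, using local closedness of O
  obtain ⟨U, Z, hU, hZ, rfl⟩ := hlc O hO
  have hclZ : closure (U ∩ Z) ⊆ Z := closure_minimal Set.inter_subset_right hZ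
  have hdiff : closure (U ∩ Z) \ (U ∩ Z) = closure (U ∩ Z) ∩ Uᶜ := by
    ext y
    simp only [Set.mem_diff, Set.mem_inter_iff, Set.mem_compl_iff]
    constructor
    · rintro ⟨hy, hy2⟩
      exact ⟨hy, fun hyU => hy2 ⟨hyU, hclZ hy⟩⟩
    · rintro ⟨hy, hyU⟩
      exact ⟨hy, fun h => hyU h.1⟩
  have hclosed : IsClosed (closure (U ∩ Z) \ (U ∩ Z)) := by
    rw [hdiff]; exact isClosed_closure.inter (isClosed_compl_iff.mpr hU)
  -- O' ⊆ closure O \ O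
  have hO'sub : O' ⊆ closure (U ∩ Z) \ (U ∩ Z) := by
    intro y hy
    refine ⟨hclO ▸ Set.mem_iUnion₂.mpr ⟨O', hO'S, hy⟩, fun hyO => ?_⟩
    exact (hdisj O' hO'𝒪 (U ∩ Z) hO hne').le_bot ⟨hy, hyO⟩
  -- hence closure O' is strictly smaller than closure O
  have hsub : closure O' ⊆ closure (U ∩ Z) \ (U ∩ Z) :=
    closure_minimal hO'sub hclosed
  have hlt : closure O' < closure (U ∩ Z) := by
    constructor
    · exact hsub.trans Set.diff_subset
    · intro hge
      obtain ⟨z, hz⟩ := hne (U ∩ Z) hO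
      exact (hsub (hge (subset_closure hz))).2 hz
  exact hlt.2 (hmin (Finset.mem_image.mpr ⟨O', hO'𝒪, rfl⟩) hlt.le)
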